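/- arXiv:1512.07935 — 3 statements merged into one kernel-verified Lean document; each statement's English description precedes it below -/
import Mathlib

section
/- Let d > 0, let k ≥ 1 be a natural number, and let φ : ℝ → ℝ be a C^∞ function. Then the limit as ε → 0⁺ of ∫_ε^d t^{−k} φ(t) dt + Σ_{j=0}^{k−2} (φ^{(j)}(0)/j!) · ε^{j+1−k}/(j+1−k) + (φ^{(k−1)}(0)/(k−1)!) · log ε exists in ℝ (this limit is Hadamard's finite part Pf.∫_0^d t^{−k} φ(t) dt). -/
set_option maxHeartbeats 1000000


open MeasureTheory Filter Set intervalIntegral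

private lemma iterDW_eq (φ : ℝ → ℝ) (hφ : ContDiff ℝ (⊤ : ℕ∞) φ)
    {a b : ℝ} (hab : a < b) (m : ℕ) {x : ℝ} (hx : x ∈ Icc a b) :
    iteratedDerivWithin m φ (Icc a b) x = iteratedDeriv m φ x := by
  have h1 : HasFTaylorSeriesUpToOn (⊤ : ℕ∞) φ (ftaylorSeries ℝ φ) (Icc a b) :=
    (contDiff_iff_ftaylorSeries.mp hφ).hasFTaylorSeriesUpToOn (Icc a b)
  have h2 := h1.eq_iteratedFDerivWithin_of_uniqueDiffOn (m := m) (by exact_mod_cast le_top)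
      (uniqueDiffOn_Icc hab) hx
  rw [iteratedDerivWithin_eq_iteratedFDerivWithin, ← h2]
  rfl

/-- existence of Hadamard's finite part `Pf.∫_0^d t^{-k} φ(t) dt`. -/
theorem hadamard_finite_part_exists_neg_int
    (d : ℝ) (hd : 0 < d) (k : ℕ) (hk : 1 ≤ k) (φ : ℝ → ℝ) (hφ : ContDiff ℝ (⊤ : ℕ∞) φ) :
    ∃ L : ℝ, Tendsto (fun ε : ℝ =>
        (∫ t in ε..d, φ t / t ^ k) +
          ∑ j ∈ Finset.range (k - 1),
            (iteratedDeriv j φ 0 / (Nat.factorial j)) *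
              ε ^ ((j : ℤ) + 1 - k) / ((j : ℝ) + 1 - k) +
          (iteratedDeriv (k - 1) φ 0 / (Nat.factorial (k - 1))) * Real.log ε)
      (nhdsWithin 0 (Ioi 0)) (nhds L) := by
  obtain ⟨n, rfl⟩ : ∃ n, k = n + 1 := ⟨k - 1, (Nat.succ_pred_eq_of_pos hk).symm⟩
  simp only [Nat.add_sub_cancel]
  set c : ℕ → ℝ := fun j => iteratedDeriv j φ 0 / (Nat.factorial j) with hc
  set P : ℝ → ℝ := fun t => ∑ j ∈ Finset.range (n + 1), c j * t ^ j with hP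
  set ψ : ℝ → ℝ := fun t => (φ t - P t) / t ^ (n + 1) with hψ
  have hPcont : Continuous P := by
    simp only [hP]
    exact continuous_finset_sum _ fun j _ => continuous_const.mul (continuous_pow j)
  -- bound on the (n+1)-st derivative on [0, d]
  obtain ⟨C, hC⟩ := (isCompact_Icc : IsCompact (Icc (0:ℝ) d)).exists_bound_of_continuousOn
    ((hφ.continuous_iteratedDeriv (n + 1) (by exact_mod_cast le_top)).continuousOn)
  -- Taylor estimate
  have hTay : ∀ t ∈ Ioc (0:ℝ) d, |φ t - P t| ≤ (C / (Nat.factorial (n+1))) * t ^ (n + 1) := by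
    intro t ht
    have ht0 : (0:ℝ) < t := ht.1
    have hfn : ContDiffOn ℝ n φ (Icc 0 t) := (hφ.of_le (by exact_mod_cast le_top)).contDiffOn
    have hφ' : ContDiff ℝ ((n + 1 : ℕ) : WithTop ℕ∞) φ := hφ.of_le (by exact_mod_cast le_top)
    have hdiff : Differentiable ℝ (iteratedDeriv n φ) :=
      hφ'.differentiable_iteratedDeriv n (by exact_mod_cast Nat.lt_succ_self n)
    have hf' : DifferentiableOn ℝ (iteratedDerivWithin n φ (Icc 0 t)) (Ioo 0 t) := by
      intro x hx
      exact ((hdiff x).differentiableWithinAt).congr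
        (fun y hy => iterDW_eq φ hφ ht0 n (Ioo_subset_Icc_self hy))
        (iterDW_eq φ hφ ht0 n (Ioo_subset_Icc_self hx))
    obtain ⟨x', hx', hEq⟩ := taylor_mean_remainder_lagrange (f := φ) (n := n) ht0.ne
      (by rw [uIcc_of_le ht0.le]; exact hfn) (by rw [uIcc_of_le ht0.le, uIoo_of_le ht0.le]; exact hf')
    rw [uIcc_of_le ht0.le] at hEq
    rw [uIoo_of_le ht0.le] at hx'
    have hPt : taylorWithinEval φ n (Icc 0 t) 0 t = P t := by
      rw [taylor_within_apply]
      simp only [hP]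
      refine Finset.sum_congr rfl fun j hj => ?_
      rw [iterDW_eq φ hφ ht0 j (left_mem_Icc.mpr ht0.le)]
      simp only [hc, smul_eq_mul, sub_zero]
      ring
    rw [hPt] at hEq
    rw [hEq, iterDW_eq φ hφ ht0 (n+1) (Ioo_subset_Icc_self hx')]
    have hx'd : x' ∈ Icc (0:ℝ) d := ⟨hx'.1.le, hx'.2.le.trans ht.2⟩
    have h1 : |iteratedDeriv (n+1) φ x'| ≤ C := by
      simpa [Real.norm_eq_abs] using hC x' hx'd
    have hfac : (0:ℝ) < (Nat.factorial (n+1) : ℝ) := by positivity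
    rw [abs_div, abs_mul, abs_of_nonneg (le_of_lt hfac),
      abs_of_nonneg (by rw [sub_zero]; positivity : (0:ℝ) ≤ (t - 0) ^ (n+1))]
    rw [div_le_iff₀ hfac]
    calc |iteratedDeriv (n+1) φ x'| * (t - 0) ^ (n+1)
        ≤ C * t ^ (n+1) := by
          rw [sub_zero]
          exact mul_le_mul_of_nonneg_right h1 (by positivity)
      _ = C / (Nat.factorial (n+1)) * t ^ (n+1) * (Nat.factorial (n+1) : ℝ) := by
          field_simp
  have hC0 : 0 ≤ C := le_trans (norm_nonneg _) (hC 0 (left_mem_Icc.mpr hd.le))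
  -- integrability of ψ on (0, d)
  have hψmeas : Measurable ψ := by
    apply Measurable.div
    · exact (hφ.continuous.sub hPcont).measurable
    · exact (continuous_pow (n+1)).measurable
  have hψbdd : ∀ᵐ x ∂(volume.restrict (Ioc (0:ℝ) d)), ‖ψ x‖ ≤ C / (Nat.factorial (n+1)) := by
    rw [ae_restrict_iff' measurableSet_Ioc]
    refine Eventually.of_forall fun t ht => ?_
    have ht0 : (0:ℝ) < t := ht.1
    have htp : (0:ℝ) < t ^ (n+1) := by positivity
    rw [Real.norm_eq_abs, hψ]
    rw [abs_div, abs_of_nonneg htp.le, div_le_iff₀ htp]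
    exact hTay t ht
  have hψint : IntervalIntegrable ψ volume 0 d := by
    rw [intervalIntegrable_iff_integrableOn_Ioc_of_le hd.le]
    exact Measure.integrableOn_of_bounded (by simp) hψmeas.aestronglyMeasurable hψbdd
  -- the primitive of ψ is continuous at 0
  have hwithin : Tendsto (fun ε : ℝ => ∫ t in ε..d, ψ t) (nhdsWithin 0 (Icc 0 d))
      (nhds (∫ t in (0:ℝ)..d, ψ t)) := by
    have hcw : ContinuousWithinAt (fun b : ℝ => ∫ x in d..b, ψ x) (Icc 0 d) 0 := by
      apply intervalIntegral.continuousWithinAt_primitive (by simp)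
      rw [min_eq_right hd.le, max_self]
      exact hψint
    have h1 : Tendsto (fun b : ℝ => ∫ x in d..b, ψ x) (nhdsWithin 0 (Icc 0 d))
        (nhds (∫ x in d..(0:ℝ), ψ x)) := hcw
    have h2 := h1.neg
    simp only [← intervalIntegral.integral_symm] at h2
    exact h2
  have hF : Tendsto (fun ε : ℝ => ∫ t in ε..d, ψ t) (nhdsWithin 0 (Ioi 0))
      (nhds (∫ t in (0:ℝ)..d, ψ t)) := by
    apply hwithin.mono_left
    rw [← nhdsWithin_Ioc_eq_nhdsGT hd]
    exact nhdsWithin_mono _ Ioc_subset_Icc_self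
  set K : ℝ := (∑ j ∈ Finset.range n,
      c j * d ^ ((j : ℤ) + 1 - ((n+1 : ℕ) : ℤ)) / ((j : ℝ) + 1 - ((n+1 : ℕ) : ℝ)))
      + c n * Real.log d with hK
  refine ⟨(∫ t in (0:ℝ)..d, ψ t) + K, ?_⟩
  have hlim : Tendsto (fun ε : ℝ => (∫ t in ε..d, ψ t) + K) (nhdsWithin 0 (Ioi 0))
      (nhds ((∫ t in (0:ℝ)..d, ψ t) + K)) := hF.add tendsto_const_nhds
  refine Tendsto.congr' ?_ hlim
  filter_upwards [Ioo_mem_nhdsGT_of_mem (show (0:ℝ) ∈ Ico (0:ℝ) d from ⟨le_refl 0, hd⟩)]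
    with ε hε
  have hε0 : (0:ℝ) < ε := hε.1
  have hεd : ε < d := hε.2
  have h0not : (0:ℝ) ∉ uIcc ε d := by
    rw [uIcc_of_le hεd.le]
    exact fun h => absurd h.1 (not_le.mpr hε0)
  have htne : ∀ t ∈ uIcc ε d, t ≠ 0 := fun t ht h => h0not (h ▸ ht)
  -- integrability on [ε, d]
  have hψε : IntervalIntegrable ψ volume ε d := by
    apply ContinuousOn.intervalIntegrable
    intro t ht
    simp only [hψ]
    exact ((hφ.continuous.sub hPcont).continuousOn t ht).div
      ((continuous_pow (n+1)).continuousOn t ht) (pow_ne_zero _ (htne t ht))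
  have hzint : ∀ j ∈ Finset.range (n+1),
      IntervalIntegrable (fun t : ℝ => c j * t ^ ((j : ℤ) - ((n+1 : ℕ) : ℤ))) volume ε d :=
    fun j _ => (intervalIntegrable_zpow (Or.inr h0not)).const_mul (c j)
  have hsumint : IntervalIntegrable
      (fun t : ℝ => ∑ j ∈ Finset.range (n+1), c j * t ^ ((j : ℤ) - ((n+1 : ℕ) : ℤ)))
      volume ε d := by
    have h := IntervalIntegrable.sum (μ := volume) (a := ε) (b := d)
      (f := fun (j : ℕ) (t : ℝ) => c j * t ^ ((j : ℤ) - ((n+1 : ℕ) : ℤ)))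
      (Finset.range (n+1)) hzint
    rw [← Finset.sum_fn]; exact h
  -- rewrite the main integral
  have hint1 : (∫ t in ε..d, φ t / t ^ (n+1)) =
      (∫ t in ε..d, ψ t) + ∑ j ∈ Finset.range (n+1),
        ∫ t in ε..d, c j * t ^ ((j : ℤ) - ((n+1 : ℕ) : ℤ)) := by
    have hcongr : EqOn (fun t : ℝ => φ t / t ^ (n+1))
        (fun t : ℝ => ψ t + ∑ j ∈ Finset.range (n+1), c j * t ^ ((j : ℤ) - ((n+1 : ℕ) : ℤ)))
        (uIcc ε d) := by
      intro t ht
      have htn : t ≠ 0 := htne t ht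
      have e1 : ∀ j ∈ Finset.range (n+1),
          c j * t ^ ((j : ℤ) - ((n+1 : ℕ) : ℤ)) = c j * t ^ j / t ^ (n+1) := by
        intro j _
        rw [zpow_sub₀ htn, zpow_natCast, zpow_natCast, ← mul_div_assoc]
      simp only
      rw [Finset.sum_congr rfl e1, ← Finset.sum_div]
      simp only [hψ, hP]
      ring
    rw [intervalIntegral.integral_congr hcongr,
      intervalIntegral.integral_add hψε hsumint,
      intervalIntegral.integral_finset_sum hzint]
  -- evaluate the elementary integrals
  have hvallast : (∫ t in ε..d, c n * t ^ ((n : ℤ) - ((n+1 : ℕ) : ℤ)))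
      = c n * (Real.log d - Real.log ε) := by
    have he : ((n : ℤ) - ((n+1 : ℕ) : ℤ)) = -1 := by push_cast; ring
    rw [he, intervalIntegral.integral_const_mul]
    simp only [zpow_neg_one]
    rw [integral_inv h0not, Real.log_div hd.ne' hε0.ne']
  have hval : ∀ j ∈ Finset.range n,
      (∫ t in ε..d, c j * t ^ ((j : ℤ) - ((n+1 : ℕ) : ℤ))) =
      c j * (d ^ ((j : ℤ) + 1 - ((n+1 : ℕ) : ℤ)) - ε ^ ((j : ℤ) + 1 - ((n+1 : ℕ) : ℤ)))
        / ((j : ℝ) + 1 - ((n+1 : ℕ) : ℝ)) := by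
    intro j hj
    have hjn : j < n := Finset.mem_range.mp hj
    have hne : ((j : ℤ) - ((n+1 : ℕ) : ℤ)) ≠ -1 := by
      push_cast
      omega
    rw [intervalIntegral.integral_const_mul, integral_zpow (Or.inr ⟨hne, h0not⟩)]
    have he : ((j : ℤ) - ((n+1 : ℕ) : ℤ)) + 1 = (j : ℤ) + 1 - ((n+1 : ℕ) : ℤ) := by ring
    rw [he, mul_div_assoc]
    congr 1
    push_cast
    ring
  -- final algebra
  rw [hint1, Finset.sum_range_succ, hvallast, Finset.sum_congr rfl hval, hK]
  simp only [hc]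
  have hsum : (∑ j ∈ Finset.range n,
        iteratedDeriv j φ 0 / (Nat.factorial j) *
          (d ^ ((j : ℤ) + 1 - ((n+1 : ℕ) : ℤ)) - ε ^ ((j : ℤ) + 1 - ((n+1 : ℕ) : ℤ)))
          / ((j : ℝ) + 1 - ((n+1 : ℕ) : ℝ)))
      + (∑ j ∈ Finset.range n,
        iteratedDeriv j φ 0 / (Nat.factorial j) * ε ^ ((j : ℤ) + 1 - ((n+1 : ℕ) : ℤ))
          / ((j : ℝ) + 1 - ((n+1 : ℕ) : ℝ)))
      = ∑ j ∈ Finset.range n,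
        iteratedDeriv j φ 0 / (Nat.factorial j) * d ^ ((j : ℤ) + 1 - ((n+1 : ℕ) : ℤ))
          / ((j : ℝ) + 1 - ((n+1 : ℕ) : ℝ)) := by
    rw [← Finset.sum_add_distrib]
    exact Finset.sum_congr rfl fun j _ => by ring
  linear_combination -hsum
end

section
/- Let d > 0, let k ≥ 1 be a natural number, and let φ : ℝ → ℝ be a C^∞ function. For z ∈ ℂ with Re z > −k−1 and z ∉ {−1, …, −k}, define F(z) = ∫_0^d t^z (φ(t) − Σ_{i=0}^{k−1} φ^{(i)}(0) t^i / i!) dt + Σ_{i=0}^{k−1} (φ^{(i)}(0)/i!) · d^{z+i+1}/(z+i+1). Then: (a) for every such z, F(z) equals the limit as ε → 0⁺ of ∫_ε^d t^z φ(t) dt + Σ_{j=0}^{k−1} (φ^{(j)}(0)/j!) · ε^{z+j+1}/(z+j+1); and (b) the limit of F(z) − φ^{(k−1)}(0)/((k−1)!(z+k)) as z → −k exists and equals the limit as ε → 0⁺ of ∫_ε^d t^{−k} φ(t) dt + Σ_{j=0}^{k−2} (φ^{(j)}(0)/j!) · ε^{j+1−k}/(j+1−k) + (φ^{(k−1)}(0)/(k−1)!)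 · log ε. -/
open MeasureTheory Filter Set
open intervalIntegral

lemma fp_idw {d : ℝ} (hd : 0 < d) {φ : ℝ → ℝ} (hφ : ContDiff ℝ (⊤ : ℕ∞) φ) (i : ℕ) {x : ℝ}
    (hx : x ∈ Icc (0:ℝ) d) : iteratedDerivWithin i φ (Icc 0 d) x = iteratedDeriv i φ x := by
  rw [iteratedDerivWithin_eq_iteratedFDerivWithin, iteratedDeriv_eq_iteratedFDeriv]
  congr 1
  exact (((contDiff_iff_ftaylorSeries.mp hφ).hasFTaylorSeriesUpToOn
    (Icc 0 d)).eq_iteratedFDerivWithin_of_uniqueDiffOn (mod_cast le_top) (uniqueDiffOn_Icc hd) hx).symm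

lemma fp_taylor {d : ℝ} (hd : 0 < d) {k : ℕ} (hk : 1 ≤ k) {φ : ℝ → ℝ}
    (hφ : ContDiff ℝ (⊤ : ℕ∞) φ) :
    ∃ C : ℝ, 0 ≤ C ∧ ∀ t ∈ Icc (0:ℝ) d,
      |φ t - ∑ i ∈ Finset.range k, iteratedDeriv i φ 0 * t ^ i / (Nat.factorial i)|
        ≤ C * t ^ k := by
  obtain ⟨n, rfl⟩ : ∃ n, k = n + 1 := ⟨k - 1, (Nat.succ_pred_eq_of_pos hk).symm⟩
  obtain ⟨M, hM⟩ := (isCompact_Icc (a := (0:ℝ)) (b := d)).exists_bound_of_continuousOn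
    (hφ.continuous_iteratedDeriv (n+1) (mod_cast le_top)).continuousOn
  refine ⟨max M 0 / Nat.factorial n, by positivity, fun t ht => ?_⟩
  have hT : taylorWithinEval φ n (Icc 0 d) 0 t
      = ∑ i ∈ Finset.range (n+1), iteratedDeriv i φ 0 * t ^ i / (Nat.factorial i) := by
    rw [taylor_within_apply]
    refine Finset.sum_congr rfl fun i _ => ?_
    rw [fp_idw hd hφ i (left_mem_Icc.mpr hd.le), smul_eq_mul, sub_zero]
    ring
  have hbd : ∀ y ∈ Icc (0:ℝ) d, ‖iteratedDerivWithin (n+1) φ (Icc 0 d) y‖ ≤ max M 0 := by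
    intro y hy
    rw [fp_idw hd hφ (n+1) hy]
    exact (hM y hy).trans (le_max_left _ _)
  have := taylor_mean_remainder_bound (n := n) hd.le ((hφ.of_le (mod_cast le_top)).contDiffOn) ht hbd
  rw [hT, Real.norm_eq_abs, sub_zero] at this
  calc |φ t - ∑ i ∈ Finset.range (n+1), iteratedDeriv i φ 0 * t ^ i / (Nat.factorial i)|
      ≤ max M 0 * t ^ (n+1) / Nat.factorial n := this
    _ = max M 0 / Nat.factorial n * t ^ (n+1) := by ring


lemma fp_meas {d : ℝ} {R : ℝ → ℝ} (hR : Continuous R) (z : ℂ) :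
    AEStronglyMeasurable (fun t : ℝ => (t : ℂ) ^ z * (R t : ℂ))
      (volume.restrict (Ioc (0:ℝ) d)) := by
  apply ContinuousOn.aestronglyMeasurable ?_ measurableSet_Ioc
  intro t ht
  refine ContinuousAt.continuousWithinAt (ContinuousAt.mul ?_ ?_)
  · exact Complex.continuousAt_ofReal_cpow_const t z (Or.inr ht.1.ne')
  · exact Complex.continuous_ofReal.continuousAt.comp hR.continuousAt

lemma fp_integrableOn {d : ℝ} (hd : 0 < d) {k : ℕ} {C : ℝ} {R : ℝ → ℝ} (hR : Continuous R)
    (hC : ∀ t ∈ Icc (0:ℝ) d, |R t| ≤ C * t ^ k) {z : ℂ} (hz : -(k + 1 : ℝ) < z.re) :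
    IntegrableOn (fun t : ℝ => (t : ℂ) ^ z * (R t : ℂ)) (Ioc 0 d) := by
  have hbint : IntegrableOn (fun t : ℝ => C * t ^ (z.re + k)) (Ioc 0 d) :=
    ((intervalIntegral.intervalIntegrable_rpow' (by linarith : (-1:ℝ) < z.re + k)).1).const_mul C
  refine Integrable.mono' hbint (fp_meas hR z) ?_
  rw [ae_restrict_iff' measurableSet_Ioc]
  filter_upwards with t ht
  have h0 : (0:ℝ) < t := ht.1
  rw [norm_mul, Complex.norm_cpow_eq_rpow_re_of_pos h0,
    Complex.norm_real, Real.norm_eq_abs]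
  calc t ^ z.re * |R t| ≤ t ^ z.re * (C * t ^ k) := by
        apply mul_le_mul_of_nonneg_left (hC t ⟨h0.le, ht.2⟩) (Real.rpow_nonneg h0.le _)
    _ = C * t ^ (z.re + k) := by
        rw [Real.rpow_add h0, Real.rpow_natCast]; ring

lemma fp_tendsto_integral {E : Type*} [NormedAddCommGroup E] [NormedSpace ℝ E]
    {d : ℝ} {f : ℝ → E} (hd : 0 < d) (hf : IntegrableOn f (Ioc 0 d)) :
    Tendsto (fun ε : ℝ => ∫ t in ε..d, f t) (nhdsWithin 0 (Ioi 0))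
      (nhds (∫ t in (0:ℝ)..d, f t)) := by
  have h1 : IntegrableOn f (uIcc 0 d) := by
    rw [uIcc_of_le hd.le, integrableOn_Icc_iff_integrableOn_Ioc]; exact hf
  have h2 := (continuousOn_primitive_interval_left h1) 0 left_mem_uIcc
  have h3 : Tendsto (fun x : ℝ => ∫ t in x..d, f t) (nhdsWithin 0 (Ioc 0 d))
      (nhds (∫ t in (0:ℝ)..d, f t)) :=
    h2.tendsto.mono_left (nhdsWithin_mono 0 (by
      rw [uIcc_of_le hd.le]; exact Ioc_subset_Icc_self))
  rwa [nhdsWithin_Ioc_eq_nhdsGT hd] at h3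


lemma fp_split {d : ℝ} {k : ℕ} {φ : ℝ → ℝ} (hφc : Continuous φ)
    {ε : ℝ} (hε : 0 < ε) (hεd : ε ≤ d)
    {z : ℂ} (hz : ∀ i ∈ Finset.range k, z + (i:ℂ) + 1 ≠ 0) :
    (∫ t in ε..d, (t : ℂ) ^ z * ((φ t : ℝ) : ℂ))
      = (∫ t in ε..d, (t : ℂ) ^ z * ((φ t - ∑ i ∈ Finset.range k,
            iteratedDeriv i φ 0 * t ^ i / (Nat.factorial i) : ℝ) : ℂ))
        + ∑ i ∈ Finset.range k, ((iteratedDeriv i φ 0 / (Nat.factorial i) : ℝ) : ℂ) *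
            ((d:ℂ) ^ (z + i + 1) - (ε:ℂ) ^ (z + i + 1)) / (z + i + 1) := by
  have hd : (0:ℝ) < d := lt_of_lt_of_le hε hεd
  have h0 : (0:ℝ) ∉ uIcc ε d := notMem_uIcc_of_lt hε hd
  have hpos : ∀ t ∈ uIcc ε d, (0:ℝ) < t := by
    intro t ht
    rw [uIcc_of_le hεd] at ht
    exact lt_of_lt_of_le hε ht.1
  have hcpow : ContinuousOn (fun t : ℝ => (t:ℂ) ^ z) (uIcc ε d) := fun t ht =>
    (Complex.continuousAt_ofReal_cpow_const t z (Or.inr (hpos t ht).ne')).continuousWithinAt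
  -- rewrite the integrand
  have key : EqOn (fun t : ℝ => (t : ℂ) ^ z * ((φ t : ℝ) : ℂ))
      (fun t : ℝ => ((t : ℂ) ^ z * ((φ t - ∑ i ∈ Finset.range k,
            iteratedDeriv i φ 0 * t ^ i / (Nat.factorial i) : ℝ) : ℂ))
        + ∑ i ∈ Finset.range k, ((iteratedDeriv i φ 0 / (Nat.factorial i) : ℝ) : ℂ) *
            (t:ℂ) ^ (z + i)) (uIcc ε d) := by
    intro t ht
    have htpos := hpos t ht
    have htne : (t:ℂ) ≠ 0 := Complex.ofReal_ne_zero.mpr htpos.ne'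
    simp only
    have hpow : ∀ i : ℕ, (t:ℂ) ^ (z + i) = (t:ℂ) ^ z * ((t ^ i : ℝ) : ℂ) := by
      intro i
      rw [Complex.cpow_add _ _ htne, Complex.cpow_natCast]
      push_cast
      ring
    simp only [hpow]
    push_cast
    rw [mul_sub, Finset.mul_sum]
    have hsc : ∑ i ∈ Finset.range k,
        (t:ℂ) ^ z * (((iteratedDeriv i φ 0 : ℝ) : ℂ) * (t:ℂ) ^ i / (i.factorial : ℂ))
        = ∑ i ∈ Finset.range k,
          ((iteratedDeriv i φ 0 : ℝ) : ℂ) / (i.factorial : ℂ) * ((t:ℂ) ^ z * (t:ℂ) ^ i) :=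
      Finset.sum_congr rfl fun i _ => by ring
    rw [hsc]
    ring
  rw [intervalIntegral.integral_congr key]
  have hint1 : IntervalIntegrable (fun t : ℝ => (t : ℂ) ^ z * ((φ t - ∑ i ∈ Finset.range k,
      iteratedDeriv i φ 0 * t ^ i / (Nat.factorial i) : ℝ) : ℂ)) MeasureTheory.volume ε d := by
    apply ContinuousOn.intervalIntegrable
    exact hcpow.mul (Complex.continuous_ofReal.comp_continuousOn
      (hφc.sub (by continuity)).continuousOn)
  have hint2 : ∀ i ∈ Finset.range k, IntervalIntegrable
      (fun t : ℝ => ((iteratedDeriv i φ 0 / (Nat.factorial i) : ℝ) : ℂ) * (t:ℂ) ^ (z + i))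
      MeasureTheory.volume ε d := by
    intro i _
    apply ContinuousOn.intervalIntegrable
    exact continuousOn_const.mul (fun t ht =>
      (Complex.continuousAt_ofReal_cpow_const t _ (Or.inr (hpos t ht).ne')).continuousWithinAt)
  have hint2' : IntervalIntegrable (fun t : ℝ => ∑ i ∈ Finset.range k,
      ((iteratedDeriv i φ 0 / (Nat.factorial i) : ℝ) : ℂ) * (t:ℂ) ^ (z + i))
      MeasureTheory.volume ε d := by
    apply ContinuousOn.intervalIntegrable
    apply continuousOn_finset_sum
    intro i _
    exact continuousOn_const.mul (fun t ht =>
      (Complex.continuousAt_ofReal_cpow_const t _ (Or.inr (hpos t ht).ne')).continuousWithinAt)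
  rw [intervalIntegral.integral_add hint1 hint2',
    intervalIntegral.integral_finset_sum hint2]
  congr 1
  refine Finset.sum_congr rfl fun i hi => ?_
  rw [intervalIntegral.integral_const_mul, integral_cpow (Or.inr ⟨?_, h0⟩), mul_div_assoc]
  intro h
  exact hz i hi (by rw [h]; ring)


lemma fp_split_real {d : ℝ} {k : ℕ} (hk : 1 ≤ k) {φ : ℝ → ℝ} (hφc : Continuous φ)
    {ε : ℝ} (hε : 0 < ε) (hεd : ε ≤ d) :
    (∫ t in ε..d, φ t / t ^ k)
      = (∫ t in ε..d, (φ t - ∑ i ∈ Finset.range k,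
            iteratedDeriv i φ 0 * t ^ i / (Nat.factorial i)) / t ^ k)
        + ∑ i ∈ Finset.range (k-1), (iteratedDeriv i φ 0 / (Nat.factorial i)) *
            (d ^ ((i:ℤ) + 1 - k) - ε ^ ((i:ℤ) + 1 - k)) / ((i:ℝ) + 1 - k)
        + (iteratedDeriv (k-1) φ 0 / (Nat.factorial (k-1)))
            * (Real.log d - Real.log ε) := by
  have hd : (0:ℝ) < d := lt_of_lt_of_le hε hεd
  have h0 : (0:ℝ) ∉ uIcc ε d := notMem_uIcc_of_lt hε hd
  have hpos : ∀ t ∈ uIcc ε d, (0:ℝ) < t := by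
    intro t ht
    rw [uIcc_of_le hεd] at ht
    exact lt_of_lt_of_le hε ht.1
  have key : EqOn (fun t : ℝ => φ t / t ^ k)
      (fun t : ℝ => (φ t - ∑ i ∈ Finset.range k,
            iteratedDeriv i φ 0 * t ^ i / (Nat.factorial i)) / t ^ k
        + ∑ i ∈ Finset.range k, (iteratedDeriv i φ 0 / (Nat.factorial i)) *
            t ^ ((i:ℤ) - k)) (uIcc ε d) := by
    intro t ht
    have htpos := hpos t ht
    have htk : (0:ℝ) < t ^ k := pow_pos htpos k
    simp only
    have hzp : ∀ i : ℕ, t ^ ((i:ℤ) - k) = t ^ i / t ^ k := by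
      intro i
      rw [zpow_sub₀ htpos.ne', zpow_natCast, zpow_natCast]
    simp only [hzp]
    rw [sub_div, Finset.sum_div]
    have hsc : ∑ i ∈ Finset.range k, iteratedDeriv i φ 0 * t ^ i / (Nat.factorial i) / t ^ k
        = ∑ i ∈ Finset.range k, iteratedDeriv i φ 0 / (Nat.factorial i) * (t ^ i / t ^ k) :=
      Finset.sum_congr rfl fun i _ => by ring
    rw [hsc]
    ring
  rw [intervalIntegral.integral_congr key]
  have hint1 : IntervalIntegrable (fun t : ℝ => (φ t - ∑ i ∈ Finset.range k,
      iteratedDeriv i φ 0 * t ^ i / (Nat.factorial i)) / t ^ k) MeasureTheory.volume ε d := by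
    apply ContinuousOn.intervalIntegrable
    exact ((hφc.sub (by continuity)).continuousOn).div
      (by fun_prop) (fun t ht => (pow_pos (hpos t ht) k).ne')
  have hint2 : ∀ i ∈ Finset.range k, IntervalIntegrable
      (fun t : ℝ => iteratedDeriv i φ 0 / (Nat.factorial i) * t ^ ((i:ℤ) - k))
      MeasureTheory.volume ε d := by
    intro i _
    apply ContinuousOn.intervalIntegrable
    exact continuousOn_const.mul (fun t ht =>
      ((continuousAt_zpow₀ t _ (Or.inl (hpos t ht).ne')).continuousWithinAt))
  have hint2' : IntervalIntegrable (fun t : ℝ => ∑ i ∈ Finset.range k,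
      iteratedDeriv i φ 0 / (Nat.factorial i) * t ^ ((i:ℤ) - k)) MeasureTheory.volume ε d := by
    apply ContinuousOn.intervalIntegrable
    apply continuousOn_finset_sum
    intro i _
    exact continuousOn_const.mul (fun t ht =>
      ((continuousAt_zpow₀ t _ (Or.inl (hpos t ht).ne')).continuousWithinAt))
  rw [intervalIntegral.integral_add hint1 hint2',
    intervalIntegral.integral_finset_sum hint2]
  rw [add_assoc]
  congr 1
  -- now compute the sum of integrals
  obtain ⟨m, rfl⟩ : ∃ m, k = m + 1 := ⟨k - 1, (Nat.succ_pred_eq_of_pos hk).symm⟩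
  rw [Finset.sum_range_succ]
  simp only [Nat.add_sub_cancel]
  congr 1
  · refine Finset.sum_congr rfl fun i hi => ?_
    have him : i < m := Finset.mem_range.mp hi
    rw [intervalIntegral.integral_const_mul, integral_zpow (Or.inr ⟨?_, h0⟩)]
    · rw [show (i:ℤ) - (↑(m+1):ℤ) + 1 = (i:ℤ) + 1 - (↑(m+1):ℤ) by push_cast; ring]
      push_cast
      ring
    · intro hcon
      omega
  · rw [intervalIntegral.integral_const_mul]
    rw [show (m:ℤ) - (↑(m+1):ℤ) = -1 by push_cast; ring]
    have : ∫ t in ε..d, (t:ℝ) ^ (-1 : ℤ) = Real.log d - Real.log ε := by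
      simp only [zpow_neg, zpow_one]
      rw [integral_inv h0, Real.log_div hd.ne' hε.ne']
    rw [this]


lemma fp_meas' {d : ℝ} {R : ℝ → ℝ} (hR : Continuous R) (z : ℂ) :
    AEStronglyMeasurable (fun t : ℝ => (t : ℂ) ^ z * (R t : ℂ))
      (volume.restrict (Ioc (0:ℝ) d)) := by
  apply ContinuousOn.aestronglyMeasurable ?_ measurableSet_Ioc
  intro t ht
  refine ContinuousAt.continuousWithinAt (ContinuousAt.mul ?_ ?_)
  · exact Complex.continuousAt_ofReal_cpow_const t z (Or.inr ht.1.ne')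
  · exact Complex.continuous_ofReal.continuousAt.comp hR.continuousAt

lemma fp_cont {d : ℝ} (hd : 0 < d) {k : ℕ} {C : ℝ} (hC0 : 0 ≤ C) {R : ℝ → ℝ}
    (hR : Continuous R) (hC : ∀ t ∈ Icc (0:ℝ) d, |R t| ≤ C * t ^ k) :
    ContinuousAt (fun z : ℂ => ∫ t in Ioc (0:ℝ) d, (t:ℂ) ^ z * (R t : ℂ)) (-(k:ℂ)) := by
  apply continuousAt_of_dominated (bound := fun t : ℝ => C * (1 + d) * t ^ (-(1/2) : ℝ))
  · exact Eventually.of_forall fun z => fp_meas' hR z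
  · filter_upwards [Metric.ball_mem_nhds (-(k:ℂ)) one_half_pos] with z hz
    rw [ae_restrict_iff' measurableSet_Ioc]
    refine Eventually.of_forall fun t ht => ?_
    have h0 : (0:ℝ) < t := ht.1
    have hre : |z.re + k| < 1/2 := by
      have h1 : dist z (-(k:ℂ)) < 1/2 := hz
      have h2 : (z - (-(k:ℂ))).re = z.re + k := by simp
      calc |z.re + (k:ℝ)| = |(z - (-(k:ℂ))).re| := by rw [h2]
        _ ≤ ‖z - (-(k:ℂ))‖ := Complex.abs_re_le_norm _
        _ < 1/2 := by rwa [Complex.dist_eq] at h1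
    obtain ⟨hre1, hre2⟩ := abs_lt.mp hre
    rw [norm_mul, Complex.norm_cpow_eq_rpow_re_of_pos h0,
      Complex.norm_real, Real.norm_eq_abs]
    have ha : t ^ (z.re + (k:ℝ) + 1/2) ≤ 1 + d := by
      rcases le_total t 1 with h1 | h1
      · exact (Real.rpow_le_one h0.le h1 (by linarith)).trans (by linarith)
      · calc t ^ (z.re + (k:ℝ) + 1/2) ≤ t ^ (1:ℝ) :=
            Real.rpow_le_rpow_of_exponent_le h1 (by linarith)
          _ = t := Real.rpow_one t
          _ ≤ 1 + d := by linarith [ht.2]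
    calc t ^ z.re * |R t| ≤ t ^ z.re * (C * t ^ k) :=
        mul_le_mul_of_nonneg_left (hC t ⟨h0.le, ht.2⟩) (Real.rpow_nonneg h0.le _)
      _ = C * t ^ (z.re + (k:ℝ)) := by
          rw [← Real.rpow_natCast t k,
            show t ^ z.re * (C * t ^ (k:ℝ)) = C * (t ^ z.re * t ^ (k:ℝ)) by ring,
            ← Real.rpow_add h0]
      _ = C * (t ^ (-(1/2):ℝ) * t ^ (z.re + (k:ℝ) + 1/2)) := by
          rw [← Real.rpow_add h0]; congr 2; ring
      _ ≤ C * (t ^ (-(1/2):ℝ) * (1 + d)) := by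
          exact mul_le_mul_of_nonneg_left
            (mul_le_mul_of_nonneg_left ha (Real.rpow_nonneg h0.le _)) hC0
      _ = C * (1 + d) * t ^ (-(1/2):ℝ) := by ring
  · exact ((intervalIntegral.intervalIntegrable_rpow' (by norm_num)).1).const_mul _
  · rw [ae_restrict_iff' measurableSet_Ioc]
    refine Eventually.of_forall fun t ht => ?_
    exact (continuousAt_const_cpow (Complex.ofReal_ne_zero.mpr ht.1.ne')).mul continuousAt_const

/-- the analytic continuation `F` of `z ↦ ∫_0^d t^z φ(t) dt` agrees with
Hadamard's finite part away from the poles, and at the pole `z = -k` the finite part is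
obtained by removing the pole. -/
theorem finite_part_eq_analytic_continuation
    (d : ℝ) (hd : 0 < d) (k : ℕ) (hk : 1 ≤ k) (φ : ℝ → ℝ) (hφ : ContDiff ℝ (⊤ : ℕ∞) φ)
    (F : ℂ → ℂ)
    (hF : ∀ z : ℂ, F z =
      (∫ t in (0:ℝ)..d, (t : ℂ) ^ z *
          ((φ t - ∑ i ∈ Finset.range k,
              iteratedDeriv i φ 0 * t ^ i / (Nat.factorial i) : ℝ) : ℂ)) +
        ∑ i ∈ Finset.range k,
          ((iteratedDeriv i φ 0 / (Nat.factorial i) : ℝ) : ℂ) *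
            (d : ℂ) ^ (z + i + 1) / (z + i + 1)) :
    (∀ z : ℂ, -(k + 1 : ℝ) < z.re → (∀ j : ℕ, 1 ≤ j → j ≤ k → z ≠ -(j : ℂ)) →
      Tendsto (fun ε : ℝ =>
          (∫ t in ε..d, (t : ℂ) ^ z * (φ t : ℂ)) +
            ∑ j ∈ Finset.range k,
              ((iteratedDeriv j φ 0 / (Nat.factorial j) : ℝ) : ℂ) *
                (ε : ℂ) ^ (z + j + 1) / (z + j + 1))
        (nhdsWithin 0 (Ioi 0)) (nhds (F z))) ∧
    ∃ L : ℝ,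
      Tendsto (fun ε : ℝ =>
          (∫ t in ε..d, φ t / t ^ k) +
            ∑ j ∈ Finset.range (k - 1),
              (iteratedDeriv j φ 0 / (Nat.factorial j)) *
                ε ^ ((j : ℤ) + 1 - k) / ((j : ℝ) + 1 - k) +
            (iteratedDeriv (k - 1) φ 0 / (Nat.factorial (k - 1))) * Real.log ε)
        (nhdsWithin 0 (Ioi 0)) (nhds L) ∧
      Tendsto (fun z : ℂ =>
          F z - ((iteratedDeriv (k - 1) φ 0 / (Nat.factorial (k - 1)) : ℝ) : ℂ) / (z + k))
        (nhdsWithin (-(k : ℂ)) {(-(k : ℂ))}ᶜ) (nhds (L : ℂ)) := by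
  have hφc : Continuous φ := hφ.continuous
  have hRc : Continuous (fun t : ℝ => φ t - ∑ i ∈ Finset.range k,
      iteratedDeriv i φ 0 * t ^ i / (Nat.factorial i)) := hφc.sub (by continuity)
  obtain ⟨C, hC0, hC⟩ := fp_taylor hd hk hφ
  constructor
  · -- part (a)
    intro z hre hz
    have hz' : ∀ i ∈ Finset.range k, z + (i:ℂ) + 1 ≠ 0 := by
      intro i hi h
      refine hz (i+1) (Nat.le_add_left 1 i) (Finset.mem_range.mp hi) ?_
      push_cast
      linear_combination h
    have hInt : IntegrableOn (fun t : ℝ => (t:ℂ) ^ z * ((φ t - ∑ i ∈ Finset.range k,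
        iteratedDeriv i φ 0 * t ^ i / (Nat.factorial i) : ℝ) : ℂ)) (Ioc 0 d) :=
      fp_integrableOn hd hRc hC hre
    have h1 : Tendsto (fun ε : ℝ =>
        (∫ t in ε..d, (t:ℂ) ^ z * ((φ t - ∑ i ∈ Finset.range k,
          iteratedDeriv i φ 0 * t ^ i / (Nat.factorial i) : ℝ) : ℂ))
          + ∑ i ∈ Finset.range k, ((iteratedDeriv i φ 0 / (Nat.factorial i) : ℝ) : ℂ) *
              (d:ℂ) ^ (z + i + 1) / (z + i + 1))
        (nhdsWithin 0 (Ioi 0)) (nhds (F z)) := by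
      rw [hF z]
      exact (fp_tendsto_integral hd hInt).add tendsto_const_nhds
    refine Tendsto.congr' ?_ h1
    filter_upwards [Ioo_mem_nhdsGT_of_mem (left_mem_Ico.mpr hd)] with ε hε
    rw [fp_split hφc hε.1 hε.2.le hz']
    have hsplit : ∑ i ∈ Finset.range k, ((iteratedDeriv i φ 0 / (Nat.factorial i) : ℝ) : ℂ) *
          ((d:ℂ) ^ (z + i + 1) - (ε:ℂ) ^ (z + i + 1)) / (z + i + 1)
        = (∑ i ∈ Finset.range k, ((iteratedDeriv i φ 0 / (Nat.factorial i) : ℝ) : ℂ) *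
            (d:ℂ) ^ (z + i + 1) / (z + i + 1))
          - ∑ i ∈ Finset.range k, ((iteratedDeriv i φ 0 / (Nat.factorial i) : ℝ) : ℂ) *
            (ε:ℂ) ^ (z + i + 1) / (z + i + 1) := by
      rw [← Finset.sum_sub_distrib]
      exact Finset.sum_congr rfl fun i _ => by ring
    rw [hsplit]
    ring
  · -- part (b)
    obtain ⟨m, rfl⟩ : ∃ m, k = m + 1 := ⟨k - 1, by omega⟩
    simp only [Nat.add_sub_cancel]
    have hIntR : IntegrableOn (fun t : ℝ => (φ t - ∑ i ∈ Finset.range (m+1),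
        iteratedDeriv i φ 0 * t ^ i / (Nat.factorial i)) / t ^ (m+1)) (Ioc 0 d) := by
      have hmeas : AEStronglyMeasurable (fun t : ℝ => (φ t - ∑ i ∈ Finset.range (m+1),
          iteratedDeriv i φ 0 * t ^ i / (Nat.factorial i)) / t ^ (m+1))
          (volume.restrict (Ioc (0:ℝ) d)) := by
        apply ContinuousOn.aestronglyMeasurable ?_ measurableSet_Ioc
        exact (hRc.continuousOn).div (by fun_prop)
          (fun t ht => (pow_pos ht.1 (m+1)).ne')
      refine Integrable.mono' (g := fun _ : ℝ => C) ?_ hmeas ?_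
      · exact integrableOn_const measure_Ioc_lt_top.ne
      · rw [ae_restrict_iff' measurableSet_Ioc]
        refine Eventually.of_forall fun t ht => ?_
        have htk : (0:ℝ) < t ^ (m+1) := pow_pos ht.1 _
        rw [Real.norm_eq_abs, abs_div, abs_of_pos htk, div_le_iff₀ htk]
        exact hC t ⟨ht.1.le, ht.2⟩
    refine ⟨(∫ t in (0:ℝ)..d, (φ t - ∑ i ∈ Finset.range (m+1),
          iteratedDeriv i φ 0 * t ^ i / (Nat.factorial i)) / t ^ (m+1))
        + ((∑ i ∈ Finset.range m, iteratedDeriv i φ 0 / (Nat.factorial i) *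
              (d ^ ((i:ℤ) + 1 - ((m+1:ℕ):ℤ)) / ((i:ℝ) + 1 - ((m+1:ℕ):ℝ))))
          + iteratedDeriv m φ 0 / (Nat.factorial m) * Real.log d), ?_, ?_⟩
    · -- real ε-limit
      have h1 := (fp_tendsto_integral hd hIntR).add (tendsto_const_nhds
        (x := (∑ i ∈ Finset.range m, iteratedDeriv i φ 0 / (Nat.factorial i) *
              (d ^ ((i:ℤ) + 1 - ((m+1:ℕ):ℤ)) / ((i:ℝ) + 1 - ((m+1:ℕ):ℝ))))
          + iteratedDeriv m φ 0 / (Nat.factorial m) * Real.log d)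
        (f := nhdsWithin (0:ℝ) (Ioi 0)))
      refine Tendsto.congr' ?_ h1
      filter_upwards [Ioo_mem_nhdsGT_of_mem (left_mem_Ico.mpr hd)] with ε hε
      rw [fp_split_real hk hφc hε.1 hε.2.le]
      simp only [Nat.add_sub_cancel]
      have hsplit : ∑ i ∈ Finset.range m, iteratedDeriv i φ 0 / (Nat.factorial i) *
            (d ^ ((i:ℤ) + 1 - ((m+1:ℕ):ℤ)) - ε ^ ((i:ℤ) + 1 - ((m+1:ℕ):ℤ)))
              / ((i:ℝ) + 1 - ((m+1:ℕ):ℝ))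
          = (∑ i ∈ Finset.range m, iteratedDeriv i φ 0 / (Nat.factorial i) *
              d ^ ((i:ℤ) + 1 - ((m+1:ℕ):ℤ)) / ((i:ℝ) + 1 - ((m+1:ℕ):ℝ)))
            - ∑ i ∈ Finset.range m, iteratedDeriv i φ 0 / (Nat.factorial i) *
              ε ^ ((i:ℤ) + 1 - ((m+1:ℕ):ℤ)) / ((i:ℝ) + 1 - ((m+1:ℕ):ℝ)) := by
        rw [← Finset.sum_sub_distrib]
        exact Finset.sum_congr rfl fun i _ => by ring
      rw [hsplit]
      have hsum2 : (∑ i ∈ Finset.range m, iteratedDeriv i φ 0 / (Nat.factorial i) *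
            (d ^ ((i:ℤ) + 1 - ((m+1:ℕ):ℤ)) / ((i:ℝ) + 1 - ((m+1:ℕ):ℝ))))
          = ∑ i ∈ Finset.range m, iteratedDeriv i φ 0 / (Nat.factorial i) *
              d ^ ((i:ℤ) + 1 - ((m+1:ℕ):ℤ)) / ((i:ℝ) + 1 - ((m+1:ℕ):ℝ)) :=
        Finset.sum_congr rfl fun i _ => by ring
      rw [hsum2]
      ring
    · -- complex limit at the pole
      have hdC : (d:ℂ) ≠ 0 := Complex.ofReal_ne_zero.mpr hd.ne'
      have heq : ∀ z : ℂ, F z - ((iteratedDeriv m φ 0 / (Nat.factorial m) : ℝ) : ℂ)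
            / (z + ((m+1:ℕ):ℂ))
          = (∫ t in (0:ℝ)..d, (t : ℂ) ^ z * ((φ t - ∑ i ∈ Finset.range (m+1),
              iteratedDeriv i φ 0 * t ^ i / (Nat.factorial i) : ℝ) : ℂ))
            + (∑ i ∈ Finset.range m, ((iteratedDeriv i φ 0 / (Nat.factorial i) : ℝ) : ℂ) *
                (d:ℂ) ^ (z + i + 1) / (z + i + 1))
            + ((iteratedDeriv m φ 0 / (Nat.factorial m) : ℝ) : ℂ) *
                (((d:ℂ) ^ (z + ((m+1:ℕ):ℂ)) - 1) / (z + ((m+1:ℕ):ℂ))) := by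
        intro z
        rw [hF z, Finset.sum_range_succ]
        push_cast
        simp only [add_assoc]
        ring
      refine Tendsto.congr' (Eventually.of_forall fun z => (heq z).symm) ?_
      -- T1
      have hc := (fp_cont hd hC0 hRc hC).tendsto.mono_left
        (nhdsWithin_le_nhds (s := {(-(↑(m+1):ℂ))}ᶜ))
      have hval : (∫ t in Ioc (0:ℝ) d, (t:ℂ) ^ (-((m+1:ℕ):ℂ)) * ((φ t - ∑ i ∈ Finset.range (m+1),
            iteratedDeriv i φ 0 * t ^ i / (Nat.factorial i) : ℝ) : ℂ))
          = ((∫ t in Ioc (0:ℝ) d, (φ t - ∑ i ∈ Finset.range (m+1),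
              iteratedDeriv i φ 0 * t ^ i / (Nat.factorial i)) / t ^ (m+1) : ℝ) : ℂ) := by
        rw [← intervalIntegral.integral_of_le (μ := volume) hd.le,
          ← intervalIntegral.integral_of_le (μ := volume) hd.le,
          ← intervalIntegral.integral_ofReal]
        apply intervalIntegral.integral_congr
        intro t _
        beta_reduce
        rcases eq_or_ne t 0 with rfl | htne
        · have hek : (-((m+1:ℕ):ℂ)) ≠ 0 := by
            simp only [ne_eq, neg_eq_zero, Nat.cast_eq_zero]
            omega
          rw [Complex.ofReal_zero, Complex.zero_cpow hek, zero_mul,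
            zero_pow (Nat.succ_ne_zero m), div_zero, Complex.ofReal_zero]
        · have hcast : (-((m+1:ℕ):ℂ)) = ((-((m+1:ℕ):ℤ) : ℤ) : ℂ) := by push_cast; ring
          rw [hcast, Complex.cpow_intCast, zpow_neg, zpow_natCast, ← Complex.ofReal_pow,
            ← Complex.ofReal_inv, ← Complex.ofReal_mul, inv_mul_eq_div]
      have T1 : Tendsto (fun z : ℂ => ∫ t in (0:ℝ)..d, (t : ℂ) ^ z *
            ((φ t - ∑ i ∈ Finset.range (m+1),
              iteratedDeriv i φ 0 * t ^ i / (Nat.factorial i) : ℝ) : ℂ))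
          (nhdsWithin (-((m+1:ℕ):ℂ)) {(-((m+1:ℕ):ℂ))}ᶜ)
          (nhds (((∫ t in (0:ℝ)..d, (φ t - ∑ i ∈ Finset.range (m+1),
              iteratedDeriv i φ 0 * t ^ i / (Nat.factorial i)) / t ^ (m+1) : ℝ) : ℂ))) := by
        simp only [intervalIntegral.integral_of_le hd.le]
        rw [← hval]
        exact hc
      -- T2
      have T2 : Tendsto (fun z : ℂ => ∑ i ∈ Finset.range m,
            ((iteratedDeriv i φ 0 / (Nat.factorial i) : ℝ) : ℂ) *
              (d:ℂ) ^ (z + i + 1) / (z + i + 1))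
          (nhdsWithin (-((m+1:ℕ):ℂ)) {(-((m+1:ℕ):ℂ))}ᶜ)
          (nhds (∑ i ∈ Finset.range m,
            ((iteratedDeriv i φ 0 / (Nat.factorial i) : ℝ) : ℂ) *
              (d:ℂ) ^ ((-((m+1:ℕ):ℂ)) + i + 1) / ((-((m+1:ℕ):ℂ)) + i + 1))) := by
        refine Tendsto.mono_left ?_ nhdsWithin_le_nhds
        refine tendsto_finset_sum _ fun i hi => ?_
        have hne : (-((m+1:ℕ):ℂ)) + i + 1 ≠ 0 := by
          intro h
          have h1 : ((i:ℤ) + 1 - ((m+1:ℕ):ℤ) : ℤ) ≠ 0 := by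
            have := Finset.mem_range.mp hi; omega
          apply h1
          have h2 : ((((i:ℤ) + 1 - ((m+1:ℕ):ℤ)) : ℤ) : ℂ) = 0 := by
            push_cast at h ⊢
            linear_combination h
          exact_mod_cast h2
        have hcont : ContinuousAt (fun z : ℂ =>
            ((iteratedDeriv i φ 0 / (Nat.factorial i) : ℝ) : ℂ) *
              (d:ℂ) ^ (z + i + 1) / (z + i + 1)) (-((m+1:ℕ):ℂ)) := by
          apply ContinuousAt.div
          · exact continuousAt_const.mul
              ((continuousAt_const_cpow hdC).comp (by fun_prop))
          · fun_prop
          · exact hne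
        exact hcont.tendsto
      -- T3
      have hder : HasDerivAt (fun w : ℂ => Complex.exp (Complex.log (d:ℂ) * (w + ((m+1:ℕ):ℂ))))
          (Complex.log (d:ℂ)) (-((m+1:ℕ):ℂ)) := by
        have h0 : HasDerivAt (fun w : ℂ => Complex.log (d:ℂ) * (w + ((m+1:ℕ):ℂ)))
            (Complex.log (d:ℂ)) (-((m+1:ℕ):ℂ)) := by
          have h1 := ((hasDerivAt_id (-((m+1:ℕ):ℂ))).add_const ((m+1:ℕ):ℂ)).const_mul
            (Complex.log (d:ℂ))
          rwa [mul_one] at h1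
        have h2 := h0.cexp
        rwa [neg_add_cancel, mul_zero, Complex.exp_zero, one_mul] at h2
      rw [hasDerivAt_iff_tendsto_slope] at hder
      have hslope : ∀ z : ℂ, slope (fun w : ℂ =>
            Complex.exp (Complex.log (d:ℂ) * (w + ((m+1:ℕ):ℂ)))) (-((m+1:ℕ):ℂ)) z
          = ((d:ℂ) ^ (z + ((m+1:ℕ):ℂ)) - 1) / (z + ((m+1:ℕ):ℂ)) := by
        intro z
        rw [slope_def_field, Complex.cpow_def_of_ne_zero hdC]
        simp only [neg_add_cancel, mul_zero, Complex.exp_zero, sub_neg_eq_add]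
      have T3 : Tendsto (fun z : ℂ =>
            ((iteratedDeriv m φ 0 / (Nat.factorial m) : ℝ) : ℂ) *
              (((d:ℂ) ^ (z + ((m+1:ℕ):ℂ)) - 1) / (z + ((m+1:ℕ):ℂ))))
          (nhdsWithin (-((m+1:ℕ):ℂ)) {(-((m+1:ℕ):ℂ))}ᶜ)
          (nhds (((iteratedDeriv m φ 0 / (Nat.factorial m) : ℝ) : ℂ) * Complex.log (d:ℂ))) := by
        exact (Filter.Tendsto.congr hslope hder).const_mul _
      have Tall := (T1.add T2).add T3
      convert Tall using 2
      rw [← Complex.ofReal_log hd.le]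
      have hv2 : (∑ i ∈ Finset.range m,
            ((iteratedDeriv i φ 0 / (Nat.factorial i) : ℝ) : ℂ) *
              (d:ℂ) ^ ((-((m+1:ℕ):ℂ)) + i + 1) / ((-((m+1:ℕ):ℂ)) + i + 1))
          = ((∑ i ∈ Finset.range m, iteratedDeriv i φ 0 / (Nat.factorial i) *
              (d ^ ((i:ℤ) + 1 - ((m+1:ℕ):ℤ)) / ((i:ℝ) + 1 - ((m+1:ℕ):ℝ))) : ℝ) : ℂ) := by
        rw [Complex.ofReal_sum]
        refine Finset.sum_congr rfl fun i hi => ?_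
        rw [show (-((m+1:ℕ):ℂ)) + i + 1 = ((((i:ℤ) + 1 - ((m+1:ℕ):ℤ)) : ℤ) : ℂ) by
            push_cast; ring,
          Complex.cpow_intCast, ← Complex.ofReal_zpow]
        push_cast
        ring
      rw [hv2]
      push_cast
      ring
end

section
/- Let d > 0 and let k ≥ 1 be a natural number. There exist a natural number N and a constant C > 0 with the following property: for every C^∞ function φ : ℝ → ℝ and every z ∈ ℂ with 0 < |z + k| ≤ 1/2, one has |F(z) − φ^{(k−1)}(0)/((k−1)!(z+k))| ≤ C · Σ_{i=0}^{N} sup_{t ∈ [0,d]} |φ^{(i)}(t)|, where F(z) = ∫_0^d t^z (φ(t) − Σ_{i=0}^{k−1} φ^{(i)}(0) t^i / i!) dt + Σ_{i=0}^{k−1} (φ^{(i)}(0)/i!) · d^{z+i+1}/(z+i+1). -/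
open MeasureTheory Filter Set

private lemma idw_eq {f : ℝ → ℝ} (hf : ContDiff ℝ (⊤ : ℕ∞) f) {s : Set ℝ}
    (hs : UniqueDiffOn ℝ s) {x : ℝ} (hx : x ∈ s) (n : ℕ) :
    iteratedDerivWithin n f s x = iteratedDeriv n f x := by
  have h := (contDiff_iff_ftaylorSeries.mp hf).hasFTaylorSeriesUpToOn s
  have h2 := h.eq_iteratedFDerivWithin_of_uniqueDiffOn (m := n) (by exact_mod_cast le_top) hs hx
  rw [iteratedDerivWithin_eq_iteratedFDerivWithin, iteratedDeriv_eq_iteratedFDeriv, ← h2]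
  rfl

private lemma sup_bdd {d : ℝ} (φ : ℝ → ℝ) (hφ : ContDiff ℝ (⊤ : ℕ∞) φ) (n : ℕ) :
    BddAbove (range fun t : Icc (0:ℝ) d => |iteratedDeriv n φ ↑t|) := by
  rw [show (fun t : Icc (0:ℝ) d => |iteratedDeriv n φ ↑t|) =
      (fun x => |iteratedDeriv n φ x|) ∘ (Subtype.val) from rfl, Set.range_comp,
      Subtype.range_coe]
  exact isCompact_Icc.bddAbove_image
    (((hφ.continuous_iteratedDeriv n (by exact_mod_cast le_top)).abs).continuousOn)

private lemma le_sup {d : ℝ} (φ : ℝ → ℝ) (hφ : ContDiff ℝ (⊤ : ℕ∞) φ) (n : ℕ) {x : ℝ}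
    (hx : x ∈ Icc (0:ℝ) d) :
    |iteratedDeriv n φ x| ≤ ⨆ t : Icc (0:ℝ) d, |iteratedDeriv n φ ↑t| :=
  le_ciSup (sup_bdd φ hφ n) (⟨x, hx⟩ : Icc (0:ℝ) d)

private lemma sup_nonneg' {d : ℝ} (hd : 0 < d) (φ : ℝ → ℝ) (hφ : ContDiff ℝ (⊤ : ℕ∞) φ) (n : ℕ) :
    0 ≤ ⨆ t : Icc (0:ℝ) d, |iteratedDeriv n φ ↑t| :=
  le_trans (abs_nonneg _) (le_sup φ hφ n ⟨le_rfl, hd.le⟩)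

private lemma taylor_bound {d : ℝ} (hd : 0 < d) (m : ℕ) {φ : ℝ → ℝ}
    (hφ : ContDiff ℝ (⊤ : ℕ∞) φ) {t : ℝ} (ht : 0 < t) (htd : t ≤ d) :
    |φ t - ∑ i ∈ Finset.range (m + 1), iteratedDeriv i φ 0 * t ^ i / (Nat.factorial i)| ≤
      (⨆ s : Icc (0:ℝ) d, |iteratedDeriv (m+1) φ ↑s|) * t ^ (m + 1) := by
  have hud : UniqueDiffOn ℝ (Icc (0:ℝ) t) := uniqueDiffOn_Icc ht
  have hdiff : Differentiable ℝ (iteratedDeriv m φ) :=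
    hφ.differentiable_iteratedDeriv m (by exact_mod_cast ENat.coe_lt_top m)
  obtain ⟨x', hx', hrem⟩ := taylor_mean_remainder_lagrange (n := m) (x₀ := 0) (x := t) ht.ne
    (by rw [uIcc_of_le ht.le]; exact ((hφ.of_le (by exact_mod_cast le_top)).contDiffOn))
    (by rw [uIcc_of_le ht.le, uIoo_of_le ht.le]; exact
      ((hdiff.differentiableOn).congr (fun y hy => idw_eq hφ hud (Ioo_subset_Icc_self hy) m)))
  rw [uIcc_of_le ht.le] at hrem
  rw [uIoo_of_le ht.le] at hx'
  have htay : taylorWithinEval φ m (Icc 0 t) 0 t =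
      ∑ i ∈ Finset.range (m + 1), iteratedDeriv i φ 0 * t ^ i / (Nat.factorial i) := by
    rw [taylor_within_apply]
    refine Finset.sum_congr rfl fun i _ => ?_
    rw [idw_eq hφ hud ⟨le_rfl, ht.le⟩ i]
    simp [smul_eq_mul]
    ring
  rw [← htay, hrem]
  have hx'Icc : x' ∈ Icc (0:ℝ) t := Ioo_subset_Icc_self hx'
  rw [idw_eq hφ hud hx'Icc (m+1)]
  rw [abs_div, abs_mul, abs_pow, abs_of_nonneg (by linarith [hx'Icc.1] : (0:ℝ) ≤ t - 0),
    abs_of_nonneg (by positivity : (0:ℝ) ≤ ((m+1).factorial : ℝ))]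
  have h1 : |iteratedDeriv (m+1) φ x'| ≤ ⨆ s : Icc (0:ℝ) d, |iteratedDeriv (m+1) φ ↑s| :=
    le_sup φ hφ (m+1) ⟨hx'Icc.1, le_trans hx'Icc.2 htd⟩
  calc |iteratedDeriv (m+1) φ x'| * (t - 0) ^ (m+1) / ((m+1).factorial : ℝ)
      ≤ |iteratedDeriv (m+1) φ x'| * (t - 0) ^ (m+1) / 1 := by
        apply div_le_div_of_nonneg_left (mul_nonneg (abs_nonneg _) (pow_nonneg (by linarith) _)) one_pos
        exact_mod_cast (m+1).factorial_pos
    _ = |iteratedDeriv (m+1) φ x'| * t ^ (m+1) := by rw [div_one, sub_zero]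
    _ ≤ (⨆ s : Icc (0:ℝ) d, |iteratedDeriv (m+1) φ ↑s|) * t ^ (m+1) :=
        mul_le_mul_of_nonneg_right h1 (by positivity)

private lemma norm_cexp_sub_one_le (u : ℂ) : ‖Complex.exp u - 1‖ ≤ ‖u‖ * Real.exp ‖u‖ := by
  have key : ∀ x ∈ Icc (0:ℝ) 1,
      ‖(fun s : ℝ => Complex.exp ((s:ℂ) * u)) x - (fun s : ℝ => Complex.exp ((s:ℂ) * u)) 0‖ ≤
        (‖u‖ * Real.exp ‖u‖) * (x - 0) := by
    apply norm_image_sub_le_of_norm_deriv_le_segment'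
      (f' := fun s : ℝ => Complex.exp ((s:ℂ) * u) * u)
    · intro x _
      simpa using ((((hasDerivAt_id ((x:ℝ):ℂ)).mul_const u).cexp).comp_ofReal).hasDerivWithinAt
    · intro x hx
      rw [norm_mul, Complex.norm_exp]
      rw [mul_comm (‖u‖)]
      apply mul_le_mul _ le_rfl (norm_nonneg _) (Real.exp_nonneg _)
      apply Real.exp_le_exp.2
      calc ((x:ℂ) * u).re ≤ |((x:ℂ) * u).re| := le_abs_self _
        _ ≤ ‖(x:ℂ)*u‖ := Complex.abs_re_le_norm _
        _ = |x| * ‖u‖ := by rw [norm_mul, Complex.norm_real, Real.norm_eq_abs]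
        _ ≤ 1 * ‖u‖ := by
            apply mul_le_mul_of_nonneg_right _ (norm_nonneg _)
            rw [abs_of_nonneg hx.1]; exact hx.2.le
        _ = ‖u‖ := one_mul _
  have := key 1 (by norm_num)
  simpa using this

set_option maxHeartbeats 1000000 in
/-- uniform boundedness of the regularized Riesz functional near the pole
`z = -k` (Lemma on the family of distributions `u_z`). -/
theorem uniform_bound_near_pole
    (d : ℝ) (hd : 0 < d) (k : ℕ) (hk : 1 ≤ k)
    (F : (ℝ → ℝ) → ℂ → ℂ)
    (hF : ∀ φ : ℝ → ℝ, ∀ z : ℂ, F φ z =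
      (∫ t in (0:ℝ)..d, (t : ℂ) ^ z *
          ((φ t - ∑ i ∈ Finset.range k,
              iteratedDeriv i φ 0 * t ^ i / (Nat.factorial i) : ℝ) : ℂ)) +
        ∑ i ∈ Finset.range k,
          ((iteratedDeriv i φ 0 / (Nat.factorial i) : ℝ) : ℂ) *
            (d : ℂ) ^ (z + i + 1) / (z + i + 1)) :
    ∃ (N : ℕ) (C : ℝ), 0 < C ∧
      ∀ φ : ℝ → ℝ, ContDiff ℝ (⊤ : ℕ∞) φ → ∀ z : ℂ,
        0 < ‖z + (k : ℂ)‖ → ‖z + (k : ℂ)‖ ≤ 1 / 2 →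
        ‖F φ z - ((iteratedDeriv (k - 1) φ 0 / (Nat.factorial (k - 1)) : ℝ) : ℂ) / (z + k)‖ ≤
          C * ∑ i ∈ Finset.range (N + 1), ⨆ t : Icc (0:ℝ) d, |iteratedDeriv i φ t| := by
  obtain ⟨m, rfl⟩ : ∃ m, k = m + 1 := ⟨k - 1, (Nat.succ_pred_eq_of_pos hk).symm⟩
  set L : ℝ := |Real.log d| with hLdef
  have hL0 : 0 ≤ L := abs_nonneg _
  set A : ℝ := max 1 d with hAdef
  have hA1 : (1:ℝ) ≤ A := le_max_left _ _
  have hA0 : (0:ℝ) < A := lt_of_lt_of_le one_pos hA1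
  set K : ℝ := ∫ t in Ioc (0:ℝ) d, t ^ (-(1:ℝ)/2) with hKdef
  have hK0 : 0 ≤ K :=
    setIntegral_nonneg measurableSet_Ioc fun t ht => Real.rpow_nonneg ht.1.le _
  set E1 : ℝ := Real.exp (((m:ℝ) + 2) * L) with hE1def
  have hE1 : 0 < E1 := Real.exp_pos _
  set E2 : ℝ := L * Real.exp (L / 2) with hE2def
  have hE2 : 0 ≤ E2 := mul_nonneg hL0 (Real.exp_nonneg _)
  refine ⟨m + 1, A * K + 2 * E1 + E2 + 1, by positivity, ?_⟩
  intro φ hφ z hz1 hz2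
  have hq : z + ((m + 1 : ℕ) : ℂ) = z + (m : ℂ) + 1 := by push_cast; ring
  rw [hq] at hz1 hz2
  have hre : |z.re + (m:ℝ) + 1| ≤ 1 / 2 := by
    have h := le_trans (Complex.abs_re_le_norm (z + (m:ℂ) + 1)) hz2
    simpa [add_assoc] using h
  -- abbreviations
  have hM0 : ∀ i, 0 ≤ ⨆ t : Icc (0:ℝ) d, |iteratedDeriv i φ ↑t| :=
    fun i => sup_nonneg' hd φ hφ i
  have hMle : ∀ i, |iteratedDeriv i φ 0| ≤ ⨆ t : Icc (0:ℝ) d, |iteratedDeriv i φ ↑t| :=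
    fun i => le_sup φ hφ i ⟨le_rfl, hd.le⟩
  set M : ℕ → ℝ := fun i => ⨆ t : Icc (0:ℝ) d, |iteratedDeriv i φ ↑t| with hMdef
  set I : ℂ := ∫ t in (0:ℝ)..d, (t : ℂ) ^ z *
      ((φ t - ∑ i ∈ Finset.range (m+1),
          iteratedDeriv i φ 0 * t ^ i / (Nat.factorial i) : ℝ) : ℂ) with hIdef
  set S : ℂ := ∑ i ∈ Finset.range m,
      ((iteratedDeriv i φ 0 / (Nat.factorial i) : ℝ) : ℂ) *
        (d : ℂ) ^ (z + (i:ℂ) + 1) / (z + (i:ℂ) + 1) with hSdef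
  set T : ℂ := ((iteratedDeriv m φ 0 / (Nat.factorial m) : ℝ) : ℂ) *
      ((d : ℂ) ^ (z + (m:ℂ) + 1) - 1) / (z + (m:ℂ) + 1) with hTdef
  have hsplit : F φ z -
      ((iteratedDeriv (m + 1 - 1) φ 0 / (Nat.factorial (m + 1 - 1)) : ℝ) : ℂ) /
        (z + ((m + 1 : ℕ) : ℂ)) = I + S + T := by
    rw [hF φ z, Finset.sum_range_succ, hq]
    simp only [Nat.add_sub_cancel, hIdef, hSdef, hTdef]
    ring
  -- bound on I
  have hIbound : ‖I‖ ≤ (A * M (m+1)) * K := by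
    have hpt : ∀ t ∈ Ioc (0:ℝ) d, ‖(t : ℂ) ^ z *
        ((φ t - ∑ i ∈ Finset.range (m+1),
            iteratedDeriv i φ 0 * t ^ i / (Nat.factorial i) : ℝ) : ℂ)‖ ≤
          (A * M (m+1)) * t ^ (-(1:ℝ)/2) := by
      intro t ht
      rw [norm_mul, Complex.norm_cpow_eq_rpow_re_of_pos ht.1,
        Complex.norm_real, Real.norm_eq_abs]
      have htay := taylor_bound hd m hφ ht.1 ht.2
      have hmid : t ^ (z.re + ((m:ℝ)+1) + 1/2) ≤ A := by
        rcases le_or_gt t 1 with h1 | h1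
        · exact le_trans (Real.rpow_le_one ht.1.le h1 (by cases abs_le.mp hre; linarith)) hA1
        · calc t ^ (z.re + ((m:ℝ)+1) + 1/2) ≤ t ^ (1:ℝ) :=
              Real.rpow_le_rpow_of_exponent_le h1.le (by cases abs_le.mp hre; linarith)
            _ = t := Real.rpow_one t
            _ ≤ A := le_trans ht.2 (le_max_right _ _)
      calc t ^ z.re * |φ t - ∑ i ∈ Finset.range (m+1),
              iteratedDeriv i φ 0 * t ^ i / (Nat.factorial i)|
          ≤ t ^ z.re * (M (m+1) * t ^ (m+1)) := by
            apply mul_le_mul_of_nonneg_left htay (Real.rpow_nonneg ht.1.le _)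
        _ = M (m+1) * (t ^ z.re * t ^ (((m+1:ℕ)):ℝ)) := by
            rw [Real.rpow_natCast]; ring
        _ = M (m+1) * (t ^ (-(1:ℝ)/2) * t ^ (z.re + ((m:ℝ)+1) + 1/2)) := by
            rw [← Real.rpow_add ht.1, ← Real.rpow_add ht.1]
            congr 2
            push_cast
            ring
        _ ≤ M (m+1) * (t ^ (-(1:ℝ)/2) * A) := by
            apply mul_le_mul_of_nonneg_left _ (hM0 (m+1))
            exact mul_le_mul_of_nonneg_left hmid (Real.rpow_nonneg ht.1.le _)
        _ = (A * M (m+1)) * t ^ (-(1:ℝ)/2) := by ring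
    rw [hIdef, intervalIntegral.integral_of_le hd.le]
    calc ‖∫ t in Ioc (0:ℝ) d, (t : ℂ) ^ z *
          ((φ t - ∑ i ∈ Finset.range (m+1),
              iteratedDeriv i φ 0 * t ^ i / (Nat.factorial i) : ℝ) : ℂ)‖
        ≤ ∫ t in Ioc (0:ℝ) d, ‖(t : ℂ) ^ z *
          ((φ t - ∑ i ∈ Finset.range (m+1),
              iteratedDeriv i φ 0 * t ^ i / (Nat.factorial i) : ℝ) : ℂ)‖ :=
          norm_integral_le_integral_norm _
      _ ≤ ∫ t in Ioc (0:ℝ) d, (A * M (m+1)) * t ^ (-(1:ℝ)/2) := by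
          apply integral_mono_of_nonneg (Eventually.of_forall fun t => norm_nonneg _)
          · exact ((intervalIntegral.intervalIntegrable_rpow' (by norm_num)).const_mul (A * M (m+1))).1
          · exact (ae_restrict_iff' measurableSet_Ioc).mpr (Eventually.of_forall hpt)
      _ = (A * M (m+1)) * K := by rw [hKdef, integral_const_mul]
  -- bound on S
  have hSbound : ‖S‖ ≤ (2 * E1) * ∑ i ∈ Finset.range m, M i := by
    rw [hSdef]
    calc ‖∑ i ∈ Finset.range m,
          ((iteratedDeriv i φ 0 / (Nat.factorial i) : ℝ) : ℂ) *
            (d : ℂ) ^ (z + (i:ℂ) + 1) / (z + (i:ℂ) + 1)‖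
        ≤ ∑ i ∈ Finset.range m, ‖((iteratedDeriv i φ 0 / (Nat.factorial i) : ℝ) : ℂ) *
            (d : ℂ) ^ (z + (i:ℂ) + 1) / (z + (i:ℂ) + 1)‖ := norm_sum_le _ _
      _ ≤ ∑ i ∈ Finset.range m, (2 * E1) * M i := ?_
      _ = (2 * E1) * ∑ i ∈ Finset.range m, M i := by rw [Finset.mul_sum]
    apply Finset.sum_le_sum
    intro i hi
    have him : (i:ℝ) < m := by exact_mod_cast Finset.mem_range.mp hi
    have hi0 : (0:ℝ) ≤ i := Nat.cast_nonneg i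
    -- numerator bound
    have hnum1 : ‖((iteratedDeriv i φ 0 / (Nat.factorial i) : ℝ) : ℂ)‖ ≤ M i := by
      rw [Complex.norm_real, Real.norm_eq_abs, abs_div,
        abs_of_pos (by exact_mod_cast i.factorial_pos : (0:ℝ) < (Nat.factorial i : ℝ))]
      calc |iteratedDeriv i φ 0| / (Nat.factorial i : ℝ) ≤ |iteratedDeriv i φ 0| / 1 := by
            apply div_le_div_of_nonneg_left (abs_nonneg _) one_pos
            exact_mod_cast i.factorial_pos
        _ = |iteratedDeriv i φ 0| := div_one _
        _ ≤ M i := hMle i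
    have hnum2 : ‖(d : ℂ) ^ (z + (i:ℂ) + 1)‖ ≤ E1 := by
      rw [Complex.norm_cpow_eq_rpow_re_of_pos hd]
      have hrei : (z + (i:ℂ) + 1).re = z.re + (i:ℝ) + 1 := by simp
      rw [hrei, Real.rpow_def_of_pos hd, hE1def]
      apply Real.exp_le_exp.2
      obtain ⟨ha, hb⟩ := abs_le.mp hre
      calc Real.log d * (z.re + (i:ℝ) + 1) ≤ |Real.log d * (z.re + (i:ℝ) + 1)| := le_abs_self _
        _ = L * |z.re + (i:ℝ) + 1| := by rw [abs_mul, hLdef]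
        _ ≤ L * ((m:ℝ) + 2) := by
            apply mul_le_mul_of_nonneg_left _ hL0
            rw [abs_le]
            constructor <;> linarith
        _ = ((m:ℝ) + 2) * L := mul_comm _ _
    have hden : (1:ℝ)/2 ≤ ‖z + (i:ℂ) + 1‖ := by
      have heq : z + (i:ℂ) + 1 = (z + (m:ℂ) + 1) - (((m:ℝ) - (i:ℝ) : ℝ) : ℂ) := by
        push_cast; ring
      have h1 : (1:ℝ) ≤ ‖((((m:ℝ) - (i:ℝ)) : ℝ) : ℂ)‖ := by
        rw [Complex.norm_real, Real.norm_eq_abs, abs_of_nonneg (by linarith)]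
        have : (i:ℝ) + 1 ≤ (m:ℝ) := by
          have := Finset.mem_range.mp hi
          exact_mod_cast this
        linarith
      calc (1:ℝ)/2 ≤ ‖(((m:ℝ) - (i:ℝ) : ℝ) : ℂ)‖ - ‖z + (m:ℂ) + 1‖ := by linarith
        _ ≤ ‖(((m:ℝ) - (i:ℝ) : ℝ) : ℂ) - (z + (m:ℂ) + 1)‖ := norm_sub_norm_le _ _
        _ = ‖(z + (m:ℂ) + 1) - (((m:ℝ) - (i:ℝ) : ℝ) : ℂ)‖ := norm_sub_rev _ _
        _ = ‖z + (i:ℂ) + 1‖ := by rw [← heq]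
    rw [norm_div, norm_mul]
    calc ‖((iteratedDeriv i φ 0 / (Nat.factorial i) : ℝ) : ℂ)‖ * ‖(d : ℂ) ^ (z + (i:ℂ) + 1)‖ /
          ‖z + (i:ℂ) + 1‖
        ≤ (M i * E1) / (1/2) := by
          apply div_le_div₀ (mul_nonneg (hM0 i) hE1.le)
            (mul_le_mul hnum1 hnum2 (norm_nonneg _) (hM0 i)) (by norm_num) hden
      _ = (2 * E1) * M i := by ring
  -- bound on T
  have hTbound : ‖T‖ ≤ E2 * M m := by
    rw [hTdef, norm_div, norm_mul, div_le_iff₀ hz1]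
    have hcp : (d : ℂ) ^ (z + (m:ℂ) + 1) =
        Complex.exp (((Real.log d : ℝ) : ℂ) * (z + (m:ℂ) + 1)) := by
      rw [Complex.cpow_def_of_ne_zero (by exact_mod_cast hd.ne' : (d:ℂ) ≠ 0),
        Complex.ofReal_log hd.le]
    have hnum : ‖(d : ℂ) ^ (z + (m:ℂ) + 1) - 1‖ ≤ L * ‖z + (m:ℂ) + 1‖ * Real.exp (L/2) := by
      rw [hcp]
      calc ‖Complex.exp (((Real.log d : ℝ) : ℂ) * (z + (m:ℂ) + 1)) - 1‖
          ≤ ‖((Real.log d : ℝ) : ℂ) * (z + (m:ℂ) + 1)‖ *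
              Real.exp ‖((Real.log d : ℝ) : ℂ) * (z + (m:ℂ) + 1)‖ := norm_cexp_sub_one_le _
        _ = (L * ‖z + (m:ℂ) + 1‖) * Real.exp (L * ‖z + (m:ℂ) + 1‖) := by
            rw [norm_mul, Complex.norm_real, Real.norm_eq_abs, hLdef]
        _ ≤ (L * ‖z + (m:ℂ) + 1‖) * Real.exp (L/2) := by
            apply mul_le_mul_of_nonneg_left _ (mul_nonneg hL0 (norm_nonneg _))
            apply Real.exp_le_exp.2
            calc L * ‖z + (m:ℂ) + 1‖ ≤ L * (1/2) :=
                mul_le_mul_of_nonneg_left hz2 hL0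
              _ = L / 2 := by ring
        _ = L * ‖z + (m:ℂ) + 1‖ * Real.exp (L/2) := by ring
    have hcm : ‖((iteratedDeriv m φ 0 / (Nat.factorial m) : ℝ) : ℂ)‖ ≤ M m := by
      rw [Complex.norm_real, Real.norm_eq_abs, abs_div,
        abs_of_pos (by exact_mod_cast m.factorial_pos : (0:ℝ) < (Nat.factorial m : ℝ))]
      calc |iteratedDeriv m φ 0| / (Nat.factorial m : ℝ) ≤ |iteratedDeriv m φ 0| / 1 := by
            apply div_le_div_of_nonneg_left (abs_nonneg _) one_pos
            exact_mod_cast m.factorial_pos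
        _ = |iteratedDeriv m φ 0| := div_one _
        _ ≤ M m := hMle m
    calc ‖((iteratedDeriv m φ 0 / (Nat.factorial m) : ℝ) : ℂ)‖ *
          ‖(d : ℂ) ^ (z + (m:ℂ) + 1) - 1‖
        ≤ M m * (L * ‖z + (m:ℂ) + 1‖ * Real.exp (L/2)) :=
          mul_le_mul hcm hnum (norm_nonneg _) (hM0 m)
      _ = E2 * M m * ‖z + (m:ℂ) + 1‖ := by rw [hE2def]; ring
  -- put it together
  have hsum : ∑ i ∈ Finset.range (m + 1 + 1), M i =
      (∑ i ∈ Finset.range m, M i) + M m + M (m+1) := by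
    rw [Finset.sum_range_succ, Finset.sum_range_succ]
  have hSig0 : 0 ≤ ∑ i ∈ Finset.range m, M i := Finset.sum_nonneg fun i _ => hM0 i
  rw [hsplit]
  calc ‖I + S + T‖ ≤ ‖I + S‖ + ‖T‖ := norm_add_le _ _
    _ ≤ ‖I‖ + ‖S‖ + ‖T‖ := by linarith [norm_add_le I S]
    _ ≤ (A * M (m+1)) * K + (2 * E1) * (∑ i ∈ Finset.range m, M i) + E2 * M m := by
        linarith
    _ ≤ (A * K + 2 * E1 + E2 + 1) * ∑ i ∈ Finset.range (m + 1 + 1), M i := by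
        rw [hsum]
        have c1 : (A * M (m+1)) * K ≤ (A * K + 2 * E1 + E2 + 1) * M (m+1) := by
          have : A * K ≤ A * K + 2 * E1 + E2 + 1 := by linarith
          calc (A * M (m+1)) * K = (A * K) * M (m+1) := by ring
            _ ≤ (A * K + 2 * E1 + E2 + 1) * M (m+1) :=
              mul_le_mul_of_nonneg_right this (hM0 _)
        have c2 : (2 * E1) * (∑ i ∈ Finset.range m, M i) ≤
            (A * K + 2 * E1 + E2 + 1) * (∑ i ∈ Finset.range m, M i) := by
          apply mul_le_mul_of_nonneg_right _ hSig0
          nlinarith [mul_nonneg hA0.le hK0]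
        have c3 : E2 * M m ≤ (A * K + 2 * E1 + E2 + 1) * M m := by
          apply mul_le_mul_of_nonneg_right _ (hM0 m)
          nlinarith [mul_nonneg hA0.le hK0]
        nlinarith [c1, c2, c3]
end
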